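/- Let n = 2^k with k ≥ 2, identify the vertices of K_n with (Z/2)^k, and colour edge {a,b} by a+b. If T is a spanning tree of K_n all of whose edge colours are distinct (rainbow), then it is impossible that exactly two vertices of T have even degree and all other vertices have odd degree. In particular, this colouring of K_n contains no rainbow Hamilton path. -/

import Mathlib

open Finset

/-- The colouring of `K_{2^k}` on vertex set `(Z/2)^k` giving edge `{a,b}` the colour `a+b`. -/
def mmCol (k : ℕ) : Sym2 (Fin k → ZMod 2) → (Fin k → ZMod 2) :=
  Sym2.lift ⟨fun a b => a + b, fun a b => add_comm a b⟩

lemma mm_addSelf {k : ℕ} (v : Fin k → ZMod 2) : v + v = 0 := by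
  have h : ∀ x : ZMod 2, x + x = 0 := by decide
  funext i; exact h (v i)

lemma mm_smul_even {k n : ℕ} (hn : Even n) (v : Fin k → ZMod 2) : n • v = 0 := by
  obtain ⟨m, rfl⟩ := hn
  rw [add_nsmul, mm_addSelf]

lemma mm_smul_odd {k n : ℕ} (hn : Odd n) (v : Fin k → ZMod 2) : n • v = v := by
  obtain ⟨m, rfl⟩ := hn
  rw [add_nsmul, two_mul, add_nsmul, mm_addSelf, one_nsmul, zero_add]

lemma mm_eq_of_add_eq_zero {k : ℕ} {a b : Fin k → ZMod 2} (h : a + b = 0) : a = b := by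
  calc a = a + (b + b) := by rw [mm_addSelf, add_zero]
    _ = (a + b) + b := (add_assoc a b b).symm
    _ = b := by rw [h, zero_add]

lemma mm_card : ∀ k : ℕ, Fintype.card (Fin k → ZMod 2) = 2 ^ k := by
  intro k; simp

lemma mm_sum_univ {k : ℕ} (hk : 2 ≤ k) : ∑ v : Fin k → ZMod 2, v = 0 := by
  funext i
  rw [Finset.sum_apply]
  have hj : ∃ j : Fin k, j ≠ i := by
    rcases eq_or_ne i ⟨0, by omega⟩ with h | h
    · exact ⟨⟨1, by omega⟩, by rw [h]; intro hc; simpa using congrArg Fin.val hc⟩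
    · exact ⟨⟨0, by omega⟩, fun hc => h hc.symm⟩
  obtain ⟨j, hj⟩ := hj
  refine Finset.sum_ninvolution (fun v => Function.update v j (v j + 1)) ?_ ?_ (fun _ => mem_univ _) ?_
  · intro v
    show v i + Function.update v j (v j + 1) i = 0
    rw [Function.update_of_ne hj.symm]
    have h : ∀ x : ZMod 2, x + x = 0 := by decide
    exact h (v i)
  · intro v _ hc
    have := congrFun hc j
    simp only [Function.update_self] at this
    simp at this
  · intro v
    funext x
    rcases eq_or_ne x j with rfl | hx
    · simp only [Function.update_self]
      have h : ∀ a : ZMod 2, a + 1 + 1 = a := by decide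
      exact h (v x)
    · simp only [Function.update_of_ne hx]

lemma mm_sum_finset {k : ℕ} (hk : 2 ≤ k) {S : Finset (Fin k → ZMod 2)}
    (hS : S ⊆ Finset.univ.erase 0) (hcard : S.card = 2 ^ k - 1) :
    ∑ v ∈ S, v = 0 := by
  have hone : 1 ≤ 2 ^ k := Nat.one_le_two_pow
  have hSeq : S = Finset.univ.erase 0 := by
    apply Finset.eq_of_subset_of_card_le hS
    rw [Finset.card_erase_of_mem (mem_univ 0), Finset.card_univ, mm_card, hcard]
  rw [hSeq, Finset.sum_erase (a := 0) Finset.univ rfl]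
  exact mm_sum_univ hk

lemma mm_ne_zero {k : ℕ} {e : Sym2 (Fin k → ZMod 2)} (he : ¬ e.IsDiag) :
    mmCol k e ≠ 0 := by
  induction e using Sym2.ind with
  | _ a b =>
    rw [Sym2.mk_isDiag_iff] at he
    simp only [mmCol, Sym2.lift_mk]
    exact fun h0 => he (mm_eq_of_add_eq_zero h0)

lemma mm_eq_sum {k : ℕ} {e : Sym2 (Fin k → ZMod 2)} (he : ¬ e.IsDiag) :
    mmCol k e = ∑ v : Fin k → ZMod 2, if v ∈ e then v else 0 := by
  induction e using Sym2.ind with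
  | _ a b =>
    rw [Sym2.mk_isDiag_iff] at he
    rw [← Finset.sum_filter]
    have hf : Finset.univ.filter (· ∈ (s(a, b) : Sym2 (Fin k → ZMod 2))) = {a, b} := by
      ext v; simp [Sym2.mem_iff]
    rw [hf, Finset.sum_pair he]
    simp [mmCol]

lemma mm_walk_sum {k : ℕ} {u w : Fin k → ZMod 2}
    (p : (⊤ : SimpleGraph (Fin k → ZMod 2)).Walk u w) :
    (p.edges.map (mmCol k)).sum = u + w := by
  induction p with
  | nil => simp; exact (mm_addSelf _).symm
  | @cons a b c h q ih =>
    simp only [SimpleGraph.Walk.edges_cons, List.map_cons, List.sum_cons, ih]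
    simp only [mmCol, Sym2.lift_mk]
    have : a + b + (b + c) = (a + c) + (b + b) := by abel
    rw [this, mm_addSelf, add_zero]

theorem stmt5 (k : ℕ) (hk : 2 ≤ k)
    (T : SimpleGraph (Fin k → ZMod 2)) [DecidableRel T.Adj] (hT : T.IsTree)
    (hrainbow : Set.InjOn (mmCol k) T.edgeSet) :
    (¬ ∃ x y : Fin k → ZMod 2, x ≠ y ∧ Even (T.degree x) ∧ Even (T.degree y) ∧
        ∀ v, v ≠ x → v ≠ y → Odd (T.degree v)) ∧
    (∀ (u w : Fin k → ZMod 2) (p : (⊤ : SimpleGraph (Fin k → ZMod 2)).Walk u w),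
        p.IsHamiltonian → ¬ (p.edges.map (mmCol k)).Nodup) := by
  classical
  constructor
  · rintro ⟨x, y, hxy, hx, hy, hodd⟩
    -- sum of colours equals sum of degree • v
    have hdiag : ∀ e ∈ T.edgeFinset, ¬ e.IsDiag := fun e he =>
      T.not_isDiag_of_mem_edgeSet (SimpleGraph.mem_edgeFinset.mp he)
    have hsumcol : ∑ e ∈ T.edgeFinset, mmCol k e = ∑ v, T.degree v • v := by
      calc ∑ e ∈ T.edgeFinset, mmCol k e
          = ∑ e ∈ T.edgeFinset, ∑ v : Fin k → ZMod 2, if v ∈ e then v else 0 :=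
            Finset.sum_congr rfl fun e he => mm_eq_sum (hdiag e he)
        _ = ∑ v : Fin k → ZMod 2, ∑ e ∈ T.edgeFinset, if v ∈ e then v else 0 :=
            Finset.sum_comm
        _ = ∑ v, T.degree v • v := by
            refine Finset.sum_congr rfl fun v _ => ?_
            rw [← Finset.sum_filter, Finset.sum_const]
            congr 1
            rw [← SimpleGraph.incidenceFinset_eq_filter,
              SimpleGraph.card_incidenceFinset_eq_degree]
    -- sum of colours is zero
    have hEcard : T.edgeFinset.card = 2 ^ k - 1 := by
      have h := hT.card_edgeFinset
      rw [mm_card] at h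
      omega
    have hzero : ∑ v, T.degree v • v = 0 := by
      rw [← hsumcol]
      have himg : ∑ c ∈ T.edgeFinset.image (mmCol k), c = ∑ e ∈ T.edgeFinset, mmCol k e :=
        Finset.sum_image (fun e he e' he' h => hrainbow (SimpleGraph.mem_edgeFinset.mp he)
          (SimpleGraph.mem_edgeFinset.mp he') h)
      rw [← himg]
      refine mm_sum_finset hk ?_ ?_
      · intro c hc
        obtain ⟨e, he, rfl⟩ := Finset.mem_image.mp hc
        exact Finset.mem_erase.mpr ⟨mm_ne_zero (hdiag e he), mem_univ _⟩
      · rw [Finset.card_image_of_injOn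
          (fun e he e' he' h => hrainbow (SimpleGraph.mem_edgeFinset.mp he)
            (SimpleGraph.mem_edgeFinset.mp he') h), hEcard]
    -- replace degree • v by parity
    have hzero2 : ∑ v : Fin k → ZMod 2, (if Odd (T.degree v) then v else 0) = 0 := by
      refine Eq.trans (Finset.sum_congr rfl fun v _ => ?_) hzero
      by_cases h : Odd (T.degree v)
      · rw [if_pos h, mm_smul_odd h]
      · rw [if_neg h, mm_smul_even (Nat.not_odd_iff_even.mp h)]
    have hpairsub : ({x, y} : Finset (Fin k → ZMod 2)) ⊆ Finset.univ := subset_univ _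
    rw [← Finset.sum_sdiff hpairsub] at hzero2
    have hxy0 : ∑ v ∈ ({x, y} : Finset (Fin k → ZMod 2)),
        (if Odd (T.degree v) then v else 0) = 0 := by
      rw [Finset.sum_pair hxy, if_neg (Nat.not_odd_iff_even.mpr hx),
        if_neg (Nat.not_odd_iff_even.mpr hy), add_zero]
    have hsdiff : ∑ v ∈ Finset.univ \ ({x, y} : Finset (Fin k → ZMod 2)),
        (if Odd (T.degree v) then v else 0)
        = ∑ v ∈ Finset.univ \ ({x, y} : Finset (Fin k → ZMod 2)), v := by
      refine Finset.sum_congr rfl fun v hv => ?_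
      rw [Finset.mem_sdiff, Finset.mem_insert, Finset.mem_singleton] at hv
      push_neg at hv
      exact if_pos (hodd v hv.2.1 hv.2.2)
    rw [hxy0, add_zero, hsdiff] at hzero2
    -- now total sum gives x + y = 0
    have htot : ∑ v : Fin k → ZMod 2, v = 0 := mm_sum_univ hk
    rw [← Finset.sum_sdiff hpairsub, hzero2, zero_add, Finset.sum_pair hxy] at htot
    exact hxy (mm_eq_of_add_eq_zero htot)
  · intro u w p hham hnodup
    have hpath : p.IsPath := by
      rw [SimpleGraph.Walk.isPath_def]
      exact List.nodup_iff_count_le_one.mpr fun a => le_of_eq (hham a)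
    have hlen : p.length = 2 ^ k - 1 := by
      have := hham.length_eq
      rwa [mm_card] at this
    have h4 : 4 ≤ 2 ^ k := by
      calc (4 : ℕ) = 2 ^ 2 := rfl
        _ ≤ 2 ^ k := Nat.pow_le_pow_right (by norm_num) hk
    have hne : u ≠ w := by
      rintro rfl
      have hnil := SimpleGraph.Walk.isPath_iff_eq_nil.mp hpath
      rw [hnil] at hlen
      simp at hlen
      omega
    have hsum1 : (p.edges.map (mmCol k)).sum = u + w := mm_walk_sum p
    have hsum2 : (p.edges.map (mmCol k)).sum = 0 := by
      set L := p.edges.map (mmCol k) with hL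
      have h1 : L.toFinset.sum id = L.sum := by
        rw [List.sum_toFinset _ hnodup, List.map_id]
      rw [← h1]
      refine mm_sum_finset hk ?_ ?_
      · intro c hc
        rw [List.mem_toFinset, hL, List.mem_map] at hc
        obtain ⟨e, he, rfl⟩ := hc
        have hmem := p.edges_subset_edgeSet he
        exact Finset.mem_erase.mpr
          ⟨mm_ne_zero ((⊤ : SimpleGraph (Fin k → ZMod 2)).not_isDiag_of_mem_edgeSet hmem),
           mem_univ _⟩
      · rw [List.toFinset_card_of_nodup hnodup, hL, List.length_map,
          SimpleGraph.Walk.length_edges, hlen]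
    rw [hsum1] at hsum2
    exact hne (mm_eq_of_add_eq_zero hsum2)
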